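/- Let d ≥ 2 and r ∈ (0, 2). Then for all x, y ∈ ℝ^d, ∫_{S^{d-1}} (√π Γ((d+r)/2) / (Γ(d/2) Γ((r+1)/2))) |⟨ξ, x - y⟩|^r dU(ξ) = ‖x - y‖^r, where U is the uniform (normalized rotation-invariant) probability measure on the unit sphere S^{d-1} ⊆ ℝ^d. Equivalently, the Riesz kernel K(x,y) = -‖x-y‖^r is the sliced version of the one-dimensional kernel k(s,t) = -(√π Γ((d+r)/2)/(Γ(d/2)Γ((r+1)/2))) |s-t|^r. -/

import Mathlib

open MeasureTheory Metric
open scoped RealInnerProductSpace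

section AuxRieszSliced

open Set Real
open scoped ENNReal

lemma aux_Ioi (q : ℝ) (hq : -1 < q) :
    ∫ x in Set.Ioi (0:ℝ), x ^ q * Real.exp (-x ^ 2) = (1/2) * Real.Gamma ((q+1)/2) := by
  rw [← integral_rpow_mul_exp_neg_rpow two_pos hq]
  refine setIntegral_congr_fun measurableSet_Ioi fun x hx => ?_
  rw [← Real.rpow_natCast x 2]
  norm_num

lemma aux_abs (q : ℝ) (hq : -1 < q) :
    ∫ x : ℝ, |x| ^ q * Real.exp (-x ^ 2) = Real.Gamma ((q+1)/2) := by
  have h : ∫ x : ℝ, |x| ^ q * Real.exp (-x ^ 2)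
      = ∫ x : ℝ, (fun s => s ^ q * Real.exp (-s ^ 2)) |x| := by
    congr 1; ext x; simp [sq_abs]
  rw [h, integral_comp_abs (f := fun s => s ^ q * Real.exp (-s ^ 2)), aux_Ioi q hq]
  ring

lemma aux_gauss : ∫ x : ℝ, Real.exp (-x ^ 2) = Real.sqrt Real.pi := by
  simpa using integral_gaussian 1

lemma gauss_step (d : ℕ) [NeZero d] (r : ℝ) (hr : 0 < r) (v : EuclideanSpace ℝ (Fin d))
    (hv : v ≠ 0) :
    ∫ z : EuclideanSpace ℝ (Fin d), |⟪z, v⟫| ^ r * Real.exp (-‖z‖ ^ 2)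
      = ‖v‖ ^ r * Real.Gamma ((r + 1) / 2) * Real.sqrt Real.pi ^ (d - 1) := by
  set u : EuclideanSpace ℝ (Fin d) := ‖v‖⁻¹ • v with hu_def
  have hu : ‖u‖ = 1 := norm_smul_inv_norm hv
  have card_eq : Module.finrank ℝ (EuclideanSpace ℝ (Fin d)) = Fintype.card (Fin d) := by
    simp [finrank_euclideanSpace_fin]
  have horth : Orthonormal ℝ (Set.restrict ({0} : Set (Fin d)) (fun _ => u)) := by
    constructor
    · intro i; exact hu
    · intro i j hij
      exact absurd (Subtype.ext ((Set.mem_singleton_iff.mp i.2).trans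
        (Set.mem_singleton_iff.mp j.2).symm)) hij
  obtain ⟨b, hb⟩ := horth.exists_orthonormalBasis_extension_of_card_eq card_eq
  have hb0 : b 0 = u := hb 0 rfl
  set F : EuclideanSpace ℝ (Fin d) → ℝ := fun w => |‖v‖ * w 0| ^ r * Real.exp (-‖w‖ ^ 2) with hF
  have step1 : ∫ z : EuclideanSpace ℝ (Fin d), |⟪z, v⟫| ^ r * Real.exp (-‖z‖ ^ 2) = ∫ z : EuclideanSpace ℝ (Fin d), F (b.repr z) := by
    congr 1; ext z
    have h1 : (b.repr z) 0 = ⟪u, z⟫ := by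
      rw [← hb0, b.repr_apply_apply]
    have h2 : ‖v‖ * (b.repr z) 0 = ⟪z, v⟫ := by
      rw [h1, hu_def, real_inner_smul_left, ← mul_assoc,
        mul_inv_cancel₀ (norm_ne_zero_iff.mpr hv), one_mul, real_inner_comm]
    simp only [hF, h2, b.repr.norm_map]
  have step2 : ∫ z : EuclideanSpace ℝ (Fin d), F (b.repr z) = ∫ w : EuclideanSpace ℝ (Fin d), F w :=
    b.measurePreserving_repr.integral_comp b.repr.toHomeomorph.measurableEmbedding F
  have step3 : ∫ w : EuclideanSpace ℝ (Fin d), F w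
      = ∫ y : Fin d → ℝ, |‖v‖ * y 0| ^ r * Real.exp (-∑ i, y i ^ 2) := by
    rw [← ((EuclideanSpace.volume_preserving_symm_measurableEquiv_toLp (Fin d)).symm _).integral_comp
      (MeasurableEquiv.measurableEmbedding _) F]
    congr 1; ext y
    have hnorm : ‖(MeasurableEquiv.toLp 2 (Fin d → ℝ)).symm.symm y‖ ^ 2 = ∑ i, y i ^ 2 := by
      rw [EuclideanSpace.norm_eq, Real.sq_sqrt (by positivity)]
      refine Finset.sum_congr rfl fun i _ => ?_
      rw [Real.norm_eq_abs, sq_abs]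
      rfl
    have happ : ((MeasurableEquiv.toLp 2 (Fin d → ℝ)).symm.symm y) 0 = y 0 := rfl
    simp only [hF, hnorm, happ]
  have step4 : ∫ y : Fin d → ℝ, |‖v‖ * y 0| ^ r * Real.exp (-∑ i, y i ^ 2)
      = ∫ y : Fin d → ℝ, ∏ i,
          ((if i = 0 then |‖v‖ * y i| ^ r else 1) * Real.exp (-(y i) ^ 2)) := by
    congr 1; ext y
    rw [Finset.prod_mul_distrib, Finset.prod_ite_eq' Finset.univ (0 : Fin d)
      (fun i => |‖v‖ * y i| ^ r), ← Real.exp_sum]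
    simp [Finset.sum_neg_distrib]
  have step5 : ∫ y : Fin d → ℝ, ∏ i,
        ((if i = 0 then |‖v‖ * y i| ^ r else 1) * Real.exp (-(y i) ^ 2))
      = ∏ i : Fin d, ∫ t : ℝ, (if i = 0 then |‖v‖ * t| ^ r else 1) * Real.exp (-t ^ 2) :=
    MeasureTheory.integral_fintype_prod_eq_prod
      (fun i t => (if i = 0 then |‖v‖ * t| ^ r else 1) * Real.exp (-t ^ 2))
  have step6 : ∀ i : Fin d, (∫ t : ℝ, (if i = 0 then |‖v‖ * t| ^ r else 1) * Real.exp (-t ^ 2))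
      = if i = 0 then ‖v‖ ^ r * Real.Gamma ((r + 1) / 2) else Real.sqrt Real.pi := by
    intro i
    by_cases hi : i = 0
    · rw [if_pos hi]
      have h' : (∫ t : ℝ, (if i = 0 then |‖v‖ * t| ^ r else 1) * Real.exp (-t ^ 2))
          = ∫ t : ℝ, ‖v‖ ^ r * (|t| ^ r * Real.exp (-t ^ 2)) := by
        congr 1; ext t
        rw [if_pos hi, abs_mul, abs_of_nonneg (norm_nonneg v),
          Real.mul_rpow (norm_nonneg v) (abs_nonneg t)]
        ring
      rw [h', MeasureTheory.integral_const_mul, aux_abs r (by linarith)]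
    · rw [if_neg hi]
      have h' : (∫ t : ℝ, (if i = 0 then |‖v‖ * t| ^ r else 1) * Real.exp (-t ^ 2))
          = ∫ t : ℝ, Real.exp (-t ^ 2) := by
        congr 1; ext t
        rw [if_neg hi, one_mul]
      rw [h', aux_gauss]
  have step7 : (∏ i : Fin d, if i = 0 then ‖v‖ ^ r * Real.Gamma ((r + 1) / 2)
        else Real.sqrt Real.pi)
      = ‖v‖ ^ r * Real.Gamma ((r + 1) / 2) * Real.sqrt Real.pi ^ (d - 1) := by
    rw [← Finset.mul_prod_erase Finset.univ _ (Finset.mem_univ (0 : Fin d)), if_pos rfl]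
    congr 1
    rw [Finset.prod_congr rfl (fun i hi => if_neg (Finset.ne_of_mem_erase hi)),
      Finset.prod_const, Finset.card_erase_of_mem (Finset.mem_univ _), Finset.card_univ,
      Fintype.card_fin]
  rw [step1, step2, step3, step4, step5, Finset.prod_congr rfl (fun i _ => step6 i), step7]

lemma integral_volumeIoiPow (n : ℕ) (g : ℝ → ℝ) :
    ∫ x : Set.Ioi (0:ℝ), g x ∂(MeasureTheory.Measure.volumeIoiPow n)
      = ∫ x in Set.Ioi (0:ℝ), x ^ n * g x := by
  simp only [MeasureTheory.Measure.volumeIoiPow, ENNReal.ofReal]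
  rw [integral_withDensity_eq_integral_smul ((measurable_subtype_coe.pow_const _).real_toNNReal),
    integral_subtype_comap measurableSet_Ioi fun a : ℝ => Real.toNNReal (a ^ n) • g a]
  refine setIntegral_congr_fun measurableSet_Ioi fun x hx => ?_
  rw [NNReal.smul_def, Real.coe_toNNReal _ (pow_nonneg hx.out.le _), smul_eq_mul]

lemma polar_step (d : ℕ) [NeZero d] (r : ℝ) (hr : 0 < r) (v : EuclideanSpace ℝ (Fin d)) :
    ∫ z : EuclideanSpace ℝ (Fin d), |⟪z, v⟫| ^ r * Real.exp (-‖z‖ ^ 2)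
      = (∫ ξ : sphere (0 : EuclideanSpace ℝ (Fin d)) 1,
          |⟪(ξ : EuclideanSpace ℝ (Fin d)), v⟫| ^ r
          ∂((volume : Measure (EuclideanSpace ℝ (Fin d))).toSphere))
        * ((1/2) * Real.Gamma (((d : ℝ) + r) / 2)) := by
  have hd1 : 1 ≤ d := Nat.one_le_iff_ne_zero.mpr (NeZero.ne d)
  set f : EuclideanSpace ℝ (Fin d) → ℝ :=
    fun z => |⟪z, v⟫| ^ r * Real.exp (-‖z‖ ^ 2) with hf
  set F1 : sphere (0 : EuclideanSpace ℝ (Fin d)) 1 → ℝ :=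
    fun ξ => |⟪(ξ : EuclideanSpace ℝ (Fin d)), v⟫| ^ r with hF1
  set F2 : Set.Ioi (0:ℝ) → ℝ := fun ρ => (ρ : ℝ) ^ r * Real.exp (-(ρ:ℝ) ^ 2) with hF2
  set g : sphere (0 : EuclideanSpace ℝ (Fin d)) 1 × Set.Ioi (0:ℝ) → ℝ :=
    fun p => F1 p.1 * F2 p.2 with hg
  have h1 : ∫ z : EuclideanSpace ℝ (Fin d), f z
      = ∫ x : ({0}ᶜ : Set (EuclideanSpace ℝ (Fin d))), f x.1
          ∂(Measure.comap Subtype.val volume) := by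
    rw [integral_subtype_comap (measurableSet_singleton _).compl f,
      restrict_compl_singleton]
  have h2 := (Measure.measurePreserving_homeomorphUnitSphereProd
    (μ := (volume : Measure (EuclideanSpace ℝ (Fin d))))).integral_comp
    (Homeomorph.measurableEmbedding _) g
  have h3 : ∀ x : ({0}ᶜ : Set (EuclideanSpace ℝ (Fin d))),
      g (homeomorphUnitSphereProd (EuclideanSpace ℝ (Fin d)) x) = f x.1 := by
    intro x
    have hnx : ‖(x : EuclideanSpace ℝ (Fin d))‖ ≠ 0 := norm_ne_zero_iff.mpr x.2
    have hinv : (0:ℝ) ≤ ‖(x : EuclideanSpace ℝ (Fin d))‖⁻¹ := inv_nonneg.mpr (norm_nonneg _)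
    have hone : ‖(x : EuclideanSpace ℝ (Fin d))‖⁻¹ ^ r * ‖(x : EuclideanSpace ℝ (Fin d))‖ ^ r
        = 1 := by
      rw [← Real.mul_rpow hinv (norm_nonneg _), inv_mul_cancel₀ hnx, Real.one_rpow]
    simp only [hg, hf, hF1, hF2, homeomorphUnitSphereProd_apply_fst_coe,
      homeomorphUnitSphereProd_apply_snd_coe]
    rw [real_inner_smul_left, abs_mul, abs_of_nonneg hinv, Real.mul_rpow hinv (abs_nonneg _)]
    linear_combination (|⟪(x : EuclideanSpace ℝ (Fin d)), v⟫| ^ r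
      * Real.exp (-‖(x : EuclideanSpace ℝ (Fin d))‖ ^ 2)) * hone
  have h4 : ∫ x : ({0}ᶜ : Set (EuclideanSpace ℝ (Fin d))), f x.1
        ∂(Measure.comap Subtype.val volume)
      = ∫ p, g p ∂(((volume : Measure (EuclideanSpace ℝ (Fin d))).toSphere).prod
          (Measure.volumeIoiPow (Module.finrank ℝ (EuclideanSpace ℝ (Fin d)) - 1))) :=
    (integral_congr_ae (Filter.Eventually.of_forall fun x => (h3 x).symm)).trans h2
  have h5 : ∫ p, g p ∂(((volume : Measure (EuclideanSpace ℝ (Fin d))).toSphere).prod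
        (Measure.volumeIoiPow (Module.finrank ℝ (EuclideanSpace ℝ (Fin d)) - 1)))
      = (∫ ξ, F1 ξ ∂(volume : Measure (EuclideanSpace ℝ (Fin d))).toSphere)
        * ∫ ρ, F2 ρ ∂(Measure.volumeIoiPow
            (Module.finrank ℝ (EuclideanSpace ℝ (Fin d)) - 1)) :=
    MeasureTheory.integral_prod_mul F1 F2
  have hfr : Module.finrank ℝ (EuclideanSpace ℝ (Fin d)) = d := finrank_euclideanSpace_fin
  have h6 : (∫ ρ, F2 ρ ∂(Measure.volumeIoiPow
      (Module.finrank ℝ (EuclideanSpace ℝ (Fin d)) - 1)))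
      = (1/2) * Real.Gamma (((d : ℝ) + r) / 2) := by
    rw [hfr, hF2,
      integral_volumeIoiPow (d - 1) (fun t : ℝ => t ^ r * Real.exp (-t ^ 2))]
    have heq : ∫ x in Set.Ioi (0:ℝ), x ^ (d - 1) * (x ^ r * Real.exp (-x ^ 2))
        = ∫ x in Set.Ioi (0:ℝ), x ^ (((d:ℝ) - 1) + r) * Real.exp (-x ^ 2) := by
      refine setIntegral_congr_fun measurableSet_Ioi fun x hx => ?_
      rw [← mul_assoc, ← Real.rpow_natCast x (d - 1), ← Real.rpow_add hx,
        Nat.cast_sub hd1, Nat.cast_one]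
    rw [heq, aux_Ioi (((d:ℝ) - 1) + r)
      (by have : (1:ℝ) ≤ d := Nat.one_le_cast.mpr hd1; linarith)]
    ring_nf
  rw [h1, h4, h5, h6]


end AuxRieszSliced

/-- The uniform (normalized rotation-invariant) probability measure on the unit sphere
`S^{d-1} ⊆ ℝ^d`, obtained by normalizing the surface measure. -/
noncomputable def uniformSphere (d : ℕ) :
    Measure (sphere (0 : EuclideanSpace ℝ (Fin d)) 1) :=
  ((volume : Measure (EuclideanSpace ℝ (Fin d))).toSphere Set.univ)⁻¹ •
    (volume : Measure (EuclideanSpace ℝ (Fin d))).toSphere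

/-- The Riesz kernel `-‖x-y‖^r`, `r ∈ (0,2)`, is the sliced version of the
one-dimensional kernel `-(√π Γ((d+r)/2)/(Γ(d/2)Γ((r+1)/2))) |s-t|^r`:
`∫_{S^{d-1}} (√π Γ((d+r)/2)/(Γ(d/2)Γ((r+1)/2))) |⟨ξ,x-y⟩|^r dU(ξ) = ‖x-y‖^r`. -/
theorem riesz_kernel_sliced (d : ℕ) (hd : 2 ≤ d) (r : ℝ) (hr : r ∈ Set.Ioo (0 : ℝ) 2)
    (x y : EuclideanSpace ℝ (Fin d)) :
    (∫ ξ : sphere (0 : EuclideanSpace ℝ (Fin d)) 1,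
        (Real.sqrt Real.pi * Real.Gamma (((d : ℝ) + r) / 2) /
            (Real.Gamma ((d : ℝ) / 2) * Real.Gamma ((r + 1) / 2))) *
          |⟪(ξ : EuclideanSpace ℝ (Fin d)), x - y⟫| ^ r ∂(uniformSphere d))
      = ‖x - y‖ ^ r := by
  obtain ⟨hr0, hr2⟩ := hr
  by_cases hv : x - y = 0
  · rw [hv]
    simp [Real.zero_rpow hr0.ne']
  · haveI : NeZero d := ⟨by omega⟩
    haveI : Nontrivial (EuclideanSpace ℝ (Fin d)) :=
      Module.nontrivial_of_finrank_pos (R := ℝ) (by rw [finrank_euclideanSpace_fin]; omega)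
    have key := (polar_step d r hr0 (x - y)).symm.trans (gauss_step d r hr0 (x - y) hv)
    have hdpos : (0:ℝ) < d := by positivity
    have hG : 0 < Real.Gamma ((d:ℝ)/2) := Real.Gamma_pos_of_pos (by positivity)
    have hG1 : 0 < Real.Gamma (((d:ℝ) + r)/2) := Real.Gamma_pos_of_pos (by positivity)
    have hG2 : 0 < Real.Gamma ((r + 1)/2) := Real.Gamma_pos_of_pos (by positivity)
    have hP : (0:ℝ) < Real.sqrt Real.pi := Real.sqrt_pos.mpr Real.pi_pos
    have huniv : (volume : Measure (EuclideanSpace ℝ (Fin d))).toSphere Set.univ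
        = (d : ENNReal) * ENNReal.ofReal (Real.sqrt Real.pi ^ d / Real.Gamma ((d:ℝ)/2 + 1)) := by
      rw [Measure.toSphere_apply_univ, finrank_euclideanSpace_fin,
        EuclideanSpace.volume_ball, Fintype.card_fin]
      simp
    have htoReal : (((volume : Measure (EuclideanSpace ℝ (Fin d))).toSphere Set.univ)⁻¹).toReal
        = ((d:ℝ) * (Real.sqrt Real.pi ^ d / Real.Gamma ((d:ℝ)/2 + 1)))⁻¹ := by
      rw [ENNReal.toReal_inv, huniv, ENNReal.toReal_mul,
        ENNReal.toReal_ofReal (by positivity)]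
      simp
    rw [uniformSphere, integral_smul_measure, MeasureTheory.integral_const_mul, htoReal,
      smul_eq_mul]
    rw [Real.Gamma_add_one (by positivity : (d:ℝ)/2 ≠ 0)] at *
    have hpow : Real.sqrt Real.pi ^ d = Real.sqrt Real.pi ^ (d - 1) * Real.sqrt Real.pi := by
      rw [← pow_succ]; congr 1; omega
    rw [hpow]
    set S := ∫ ξ : sphere (0 : EuclideanSpace ℝ (Fin d)) 1,
      |⟪(ξ : EuclideanSpace ℝ (Fin d)), x - y⟫| ^ r
      ∂(volume : Measure (EuclideanSpace ℝ (Fin d))).toSphere with hS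
    field_simp
    field_simp at key
    linear_combination key
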